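/- Let k ≥ 2 and let P be the graph of a k-polygon. Then P has no triangle hitting set of size k − 1; equivalently, every triangle hitting set of P has at least k vertices. -/

import Mathlib

/-- A point of the plane. -/
abbrev Pt := ℝ × ℝ

/-- The closed segment with the given pair of endpoints (possibly degenerate). -/
def seg (e : Pt × Pt) : Set Pt := segment ℝ e.1 e.2

/-- A `k`-polygon: `k` pairwise disjoint horizontal closed segments of positive length
and `k` pairwise disjoint vertical closed segments of positive length, each horizontal
segment meeting exactly two vertical ones and vice-versa. -/
structure KPolygon (k : ℕ) where
  H : Fin k → Pt × Pt
  V : Fin k → Pt × Pt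
  H_horiz : ∀ i, (H i).1.2 = (H i).2.2
  V_vert : ∀ j, (V j).1.1 = (V j).2.1
  H_pos : ∀ i, (H i).1 ≠ (H i).2
  V_pos : ∀ j, (V j).1 ≠ (V j).2
  H_disj : ∀ i i', i ≠ i' → seg (H i) ∩ seg (H i') = ∅
  V_disj : ∀ j j', j ≠ j' → seg (V j) ∩ seg (V j') = ∅
  H_meets : ∀ i, {j : Fin k | (seg (H i) ∩ seg (V j)).Nonempty}.ncard = 2
  V_meets : ∀ j, {i : Fin k | (seg (H i) ∩ seg (V j)).Nonempty}.ncard = 2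

/-- The corners of a `k`-polygon: the (intersection points of the) intersecting
horizontal/vertical pairs. -/
abbrev KPolygon.Corner {k : ℕ} (P : KPolygon k) : Type :=
  {ij : Fin k × Fin k // (seg (P.H ij.1) ∩ seg (P.V ij.2)).Nonempty}

/-- The vertex set of the graph of a `k`-polygon: the horizontal segments, the
vertical segments, and the corners. -/
abbrev KPolygon.Vtx {k : ℕ} (P : KPolygon k) : Type :=
  Fin k ⊕ Fin k ⊕ P.Corner

/-- The graph of a `k`-polygon: two segments are adjacent iff they intersect, and a
corner is adjacent exactly to the horizontal and the vertical segment whose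
intersection it is. -/
def KPolygon.graph {k : ℕ} (P : KPolygon k) : SimpleGraph P.Vtx :=
  SimpleGraph.fromRel (fun a b =>
    match a, b with
    | Sum.inl i, Sum.inr (Sum.inl j) => (seg (P.H i) ∩ seg (P.V j)).Nonempty
    | Sum.inr (Sum.inr c), Sum.inl i => c.1.1 = i
    | Sum.inr (Sum.inr c), Sum.inr (Sum.inl j) => c.1.2 = j
    | _, _ => False)

/-- A triangle of a graph: a set of three pairwise adjacent vertices. -/
def IsTriangle {W : Type*} (G : SimpleGraph W) (T : Finset W) : Prop :=
  T.card = 3 ∧ ∀ a ∈ T, ∀ b ∈ T, a ≠ b → G.Adj a b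

/-- Let `k ≥ 2` and let `P` be (the graph of) a `k`-polygon. Then every triangle
hitting set of `P` has at least `k` vertices; equivalently, `P` has no triangle
hitting set of size `k − 1`. -/
theorem stmt5 {k : ℕ} (hk : 2 ≤ k) (P : KPolygon k) (hconn : P.graph.Connected)
    (S : Set P.Vtx)
    (hS : ∀ T : Finset P.Vtx, IsTriangle P.graph T → ∃ x ∈ S, x ∈ T) :
    k ≤ S.ncard := by
  classical
  set p : Fin k × Fin k → Prop :=
    fun ij => (seg (P.H ij.1) ∩ seg (P.V ij.2)).Nonempty with hp
  -- the triangle attached to a corner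
  set Tset : P.Corner → Finset P.Vtx := fun c =>
    {Sum.inl c.1.1, Sum.inr (Sum.inl c.1.2), Sum.inr (Sum.inr c)} with hT
  have htri : ∀ c : P.Corner, IsTriangle P.graph (Tset c) := by
    intro c
    constructor
    · simp [hT, Finset.card_insert_of_notMem]
    · intro a ha b hb hab
      simp only [hT, Finset.mem_insert, Finset.mem_singleton] at ha hb
      have hc := c.2
      rcases ha with ha | ha | ha <;> rcases hb with hb | hb | hb <;> subst ha <;> subst hb <;>
        rw [KPolygon.graph, SimpleGraph.fromRel_adj] <;>
        first
          | exact absurd rfl hab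
          | exact ⟨hab, Or.inl hc⟩
          | exact ⟨hab, Or.inr hc⟩
          | exact ⟨hab, Or.inl rfl⟩
          | exact ⟨hab, Or.inr rfl⟩
  -- pick a hitting vertex in each corner triangle
  have hpick : ∀ c : P.Corner, ∃ x, x ∈ S ∧ x ∈ Tset c := by
    intro c
    obtain ⟨x, hx1, hx2⟩ := hS (Tset c) (htri c)
    exact ⟨x, hx1, hx2⟩
  choose f hfS hfT using hpick
  -- counting corners: there are 2k of them
  have hfilter : ∀ i : Fin k, (Finset.univ.filter fun j : Fin k => p (i, j)).card = 2 := by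
    intro i
    have := P.H_meets i
    rwa [Set.ncard_eq_toFinset_card', Set.toFinset_setOf] at this
  have hfilter' : ∀ j : Fin k, (Finset.univ.filter fun i : Fin k => p (i, j)).card = 2 := by
    intro j
    have := P.V_meets j
    rwa [Set.ncard_eq_toFinset_card', Set.toFinset_setOf] at this
  have hcard : Fintype.card P.Corner = 2 * k := by
    rw [Fintype.card_subtype]
    rw [Finset.card_eq_sum_card_fiberwise
      (f := fun ij : Fin k × Fin k => ij.1) (t := Finset.univ) (fun x _ => Finset.mem_univ _)]
    have : ∀ i : Fin k,
        ((Finset.univ.filter p).filter fun ij => ij.1 = i).card = 2 := by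
      intro i
      rw [← hfilter i]
      apply Finset.card_bij' (fun ij _ => ij.2) (fun j _ => (i, j))
      case hi =>
        intro ij hij
        simp only [Finset.mem_filter, Finset.mem_univ, true_and] at hij ⊢
        rcases hij with ⟨h1, h2⟩
        rwa [← h2]
      case hj =>
        intro j hj
        simp only [Finset.mem_filter, Finset.mem_univ, true_and] at hj ⊢
        exact ⟨hj, trivial⟩
      case left_inv =>
        intro ij hij
        simp only [Finset.mem_filter, Finset.mem_univ, true_and] at hij
        rw [← hij.2]
      case right_inv =>
        intro j hj
        rfl
    rw [show (∑ b, _) = ∑ _i : Fin k, 2 from Finset.sum_congr rfl fun i _ => this i]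
    simp only [Finset.sum_const, Finset.card_univ, Fintype.card_fin, smul_eq_mul]
    ring
  -- each vertex lies in at most 2 corner triangles
  have hfiber : ∀ a ∈ Finset.univ.image f,
      (Finset.univ.filter fun c : P.Corner => f c = a).card ≤ 2 := by
    intro a _
    match a with
    | Sum.inl i =>
      calc (Finset.univ.filter fun c : P.Corner => f c = Sum.inl i).card
          ≤ (Finset.univ.filter fun j : Fin k => p (i, j)).card := by
            apply Finset.card_le_card_of_injOn (fun c => c.1.2)
            · intro c hc
              simp only [Finset.mem_coe, Finset.mem_filter, Finset.mem_univ, true_and] at hc ⊢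
              have := hfT c
              rw [hc] at this
              simp only [hT, Finset.mem_insert, Finset.mem_singleton] at this
              rcases this with h | h | h
              · obtain rfl : i = c.1.1 := by injection h
                exact c.2
              · exact absurd h (by simp)
              · exact absurd h (by simp)
            · intro c hc c' hc' hcc
              simp only [Finset.mem_coe, Finset.mem_filter, Finset.mem_univ, true_and] at hc hc'
              have h1 : c.1.1 = i := by
                have := hfT c; rw [hc] at this
                simp only [hT, Finset.mem_insert, Finset.mem_singleton] at this
                rcases this with h | h | h
                · injection h.symm
                · exact absurd h (by simp)
                · exact absurd h (by simp)
              have h1' : c'.1.1 = i := by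
                have := hfT c'; rw [hc'] at this
                simp only [hT, Finset.mem_insert, Finset.mem_singleton] at this
                rcases this with h | h | h
                · injection h.symm
                · exact absurd h (by simp)
                · exact absurd h (by simp)
              exact Subtype.ext (Prod.ext (h1.trans h1'.symm) hcc)
        _ = 2 := hfilter i
    | Sum.inr (Sum.inl j) =>
      calc (Finset.univ.filter fun c : P.Corner => f c = Sum.inr (Sum.inl j)).card
          ≤ (Finset.univ.filter fun i : Fin k => p (i, j)).card := by
            apply Finset.card_le_card_of_injOn (fun c => c.1.1)
            · intro c hc
              simp only [Finset.mem_coe, Finset.mem_filter, Finset.mem_univ, true_and] at hc ⊢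
              have := hfT c
              rw [hc] at this
              simp only [hT, Finset.mem_insert, Finset.mem_singleton] at this
              rcases this with h | h | h
              · exact absurd h (by simp)
              · have h2 : j = c.1.2 := by
                  have := Sum.inl.inj (Sum.inr.inj h); exact this
                obtain rfl := h2
                exact c.2
              · exact absurd h (by simp)
            · intro c hc c' hc' hcc
              simp only [Finset.mem_coe, Finset.mem_filter, Finset.mem_univ, true_and] at hc hc'
              have h1 : c.1.2 = j := by
                have := hfT c; rw [hc] at this
                simp only [hT, Finset.mem_insert, Finset.mem_singleton] at this
                rcases this with h | h | h
                · exact absurd h (by simp)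
                · exact (Sum.inl.inj (Sum.inr.inj h)).symm
                · exact absurd h (by simp)
              have h1' : c'.1.2 = j := by
                have := hfT c'; rw [hc'] at this
                simp only [hT, Finset.mem_insert, Finset.mem_singleton] at this
                rcases this with h | h | h
                · exact absurd h (by simp)
                · exact (Sum.inl.inj (Sum.inr.inj h)).symm
                · exact absurd h (by simp)
              exact Subtype.ext (Prod.ext hcc (h1.trans h1'.symm))
        _ = 2 := hfilter' j
    | Sum.inr (Sum.inr c0) =>
      calc (Finset.univ.filter fun c : P.Corner => f c = Sum.inr (Sum.inr c0)).card
          ≤ ({c0} : Finset P.Corner).card := by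
            apply Finset.card_le_card
            intro c hc
            simp only [Finset.mem_filter, Finset.mem_univ, true_and] at hc
            have := hfT c
            rw [hc] at this
            simp only [hT, Finset.mem_insert, Finset.mem_singleton] at this
            rcases this with h | h | h
            · exact absurd h (by simp)
            · exact absurd h (by simp)
            · simp only [Finset.mem_singleton]
              exact (Sum.inr.inj (Sum.inr.inj h)).symm
        _ ≤ 2 := by simp
  have hmain : Fintype.card P.Corner ≤ 2 * (Finset.univ.image f).card :=
    Finset.card_le_mul_card_image Finset.univ 2 hfiber
  have himg : ((Finset.univ.image f : Finset P.Vtx) : Set P.Vtx) ⊆ S := by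
    intro x hx
    simp only [Finset.coe_image, Set.mem_image, Finset.coe_univ, Set.image_univ,
      Set.mem_range] at hx
    obtain ⟨c, rfl⟩ := hx
    exact hfS c
  have himgcard : (Finset.univ.image f).card ≤ S.ncard := by
    rw [← Set.ncard_coe_finset]
    exact Set.ncard_le_ncard himg (Set.toFinite S)
  rw [hcard] at hmain
  omega
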